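/- If X admits a covering by a small loop space, then the small loop group π₁ˢ(X,x) is a normal subgroup of π₁(X,x) for every x ∈ X. -/

import Mathlib

open CategoryTheory Topology

attribute [local instance] Path.Homotopic.setoid

noncomputable section

variable {X Y E : Type*} [TopologicalSpace X] [TopologicalSpace Y] [TopologicalSpace E]

/-- Build an element of the fundamental group from a homotopy class of loops. -/
def fromLoop {x : X} (p : Path.Homotopic.Quotient x x) : FundamentalGroup X x :=
  FundamentalGroup.fromPath p

/-- The homotopy class of loops underlying an element of the fundamental group. -/
def toLoop {x : X} (γ : FundamentalGroup X x) : Path.Homotopic.Quotient x x :=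
  FundamentalGroup.toPath γ

/-- A fundamental group element is *small* if it has a loop representative inside every
neighborhood of the basepoint. -/
def IsSmall {x : X} (γ : FundamentalGroup X x) : Prop :=
  ∀ U ∈ nhds x, ∃ δ : Path x x, (∀ t, δ t ∈ U) ∧ fromLoop ⟦δ⟧ = γ

/-- The set of small loop classes, i.e. the carrier of the small loop group `π₁ˢ(X,x)`. -/
def smallSet (X : Type*) [TopologicalSpace X] (x : X) : Set (FundamentalGroup X x) :=
  {γ | IsSmall γ}

/-- Conjugate of a loop class at `y` by a path `α` from `x` to `y`: `α * β * α⁻¹`. -/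
def conjPath {x y : X} (α : Path x y) (β : FundamentalGroup X y) : FundamentalGroup X x :=
  fromLoop (Path.Homotopic.Quotient.trans
    (Path.Homotopic.Quotient.trans (⟦α⟧ : Path.Homotopic.Quotient x y) (toLoop β))
    (⟦α.symm⟧ : Path.Homotopic.Quotient y x))

/-- The SG subgroup `π₁ˢᵍ(X,x)`: generated by conjugates of small loop classes. -/
def sgSubgroup (X : Type*) [TopologicalSpace X] (x : X) : Subgroup (FundamentalGroup X x) :=
  Subgroup.closure {g | ∃ (y : X) (α : Path x y) (β : FundamentalGroup X y), IsSmall β ∧ g = conjPath α β}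

/-- The map induced on fundamental groups by a continuous map. -/
def piMap (f : C(X, Y)) (x : X) (γ : FundamentalGroup X x) : FundamentalGroup Y (f x) :=
  fromLoop (Path.Homotopic.Quotient.map (toLoop γ) f)

/-- A small loop space: a path-connected, non-simply connected space all of whose loops
are small. -/
def IsSmallLoopSpace (X : Type*) [TopologicalSpace X] : Prop :=
  PathConnectedSpace X ∧ ¬ SimplyConnectedSpace X ∧
    ∀ (x : X) (γ : FundamentalGroup X x), IsSmall γ

/-- A space is homotopically Hausdorff if every nontrivial loop class can be kept away from
some neighborhood of its basepoint. -/
def HomotopicallyHausdorff (X : Type*) [TopologicalSpace X] : Prop :=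
  ∀ (x : X) (γ : FundamentalGroup X x), γ ≠ 1 →
    ∃ U ∈ nhds x, ∀ δ : Path x x, (∀ t, δ t ∈ U) → fromLoop ⟦δ⟧ ≠ γ

/-- The image of `π₁(U,y) → π₁(X,y)`: classes of loops having a representative inside `U`. -/
def loopsIn (U : Set X) (y : X) : Set (FundamentalGroup X y) :=
  {γ | ∃ δ : Path y y, (∀ t, δ t ∈ U) ∧ fromLoop ⟦δ⟧ = γ}

/-- A semi-locally small loop space. -/
def SemiLocallySmallLoop (X : Type*) [TopologicalSpace X] : Prop :=
  ∀ x : X, ∃ U : Set X, IsOpen U ∧ x ∈ U ∧ ∀ y ∈ U, loopsIn U y = smallSet X y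


section Helpers

open Set unitInterval

lemma toLoop_fromLoop {x : X} (q : Path.Homotopic.Quotient x x) : toLoop (fromLoop q) = q := rfl

lemma fromLoop_toLoop {x : X} (γ : FundamentalGroup X x) : fromLoop (toLoop γ) = γ :=
  rfl

lemma fromLoop_injective {x : X} : Function.Injective (fromLoop (x := x)) := by
  intro a b h
  rw [← toLoop_fromLoop a, ← toLoop_fromLoop b, h]

lemma fromLoop_trans {x : X} (a b : Path x x) :
    fromLoop (⟦a.trans b⟧ : Path.Homotopic.Quotient x x) = fromLoop ⟦b⟧ * fromLoop ⟦a⟧ := by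
  rfl

lemma fromLoop_refl {x : X} :
    fromLoop (⟦Path.refl x⟧ : Path.Homotopic.Quotient x x) = 1 := by
  rfl

lemma fromLoop_symm {x : X} (a : Path x x) :
    fromLoop (⟦a.symm⟧ : Path.Homotopic.Quotient x x) = (fromLoop ⟦a⟧)⁻¹ := by
  refine eq_inv_of_mul_eq_one_left ?_
  rw [← fromLoop_trans]
  have hh : (Path.refl x).Homotopic (a.trans a.symm) := ⟨Path.Homotopy.reflTransSymm a⟩
  have : (⟦a.trans a.symm⟧ : Path.Homotopic.Quotient x x) = ⟦Path.refl x⟧ :=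
    (Quotient.sound hh).symm
  rw [this, fromLoop_refl]

/-- The small set is a subgroup. -/
lemma smallSet_one_mem (x : X) : (1 : FundamentalGroup X x) ∈ smallSet X x := by
  show IsSmall (1 : FundamentalGroup X x)
  intro U hU
  exact ⟨Path.refl x, fun _ => mem_of_mem_nhds hU, fromLoop_refl⟩

lemma smallSet_mul_mem {x : X} {γ₁ γ₂ : FundamentalGroup X x}
    (h₁ : γ₁ ∈ smallSet X x) (h₂ : γ₂ ∈ smallSet X x) : γ₁ * γ₂ ∈ smallSet X x := by
  intro U hU
  obtain ⟨δ₁, hδ₁U, hδ₁⟩ := h₁ U hU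
  obtain ⟨δ₂, hδ₂U, hδ₂⟩ := h₂ U hU
  refine ⟨δ₂.trans δ₁, fun t => ?_, by rw [fromLoop_trans, hδ₁, hδ₂]⟩
  have : (δ₂.trans δ₁) t ∈ Set.range (δ₂.trans δ₁) := Set.mem_range_self t
  rw [Path.trans_range] at this
  rcases this with ⟨s, hs⟩ | ⟨s, hs⟩
  · rw [← hs]; exact hδ₂U s
  · rw [← hs]; exact hδ₁U s

lemma smallSet_inv_mem {x : X} {γ : FundamentalGroup X x}
    (h : γ ∈ smallSet X x) : γ⁻¹ ∈ smallSet X x := by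
  intro U hU
  obtain ⟨δ, hδU, hδ⟩ := h U hU
  exact ⟨δ.symm, fun t => hδU _, by rw [fromLoop_symm, hδ]⟩

/-- Lift of a path staying in the base set of a trivialization of a covering. -/
lemma covering_surjective {E X : Type*} [TopologicalSpace E] [TopologicalSpace X]
    [PreconnectedSpace X] [Nonempty E] (p : C(E, X)) (hp : IsCoveringMap p) :
    Function.Surjective p := by
  have hclopen : IsClopen (Set.range p) := by
    constructor
    · rw [← isOpen_compl_iff]
      refine isOpen_iff_mem_nhds.mpr fun x hx => ?_
      obtain ⟨-, U, hxU, hU, -, H, -⟩ := hp x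
      refine mem_nhds_iff.mpr ⟨U, fun y hy hyr => ?_, hU, hxU⟩
      obtain ⟨e, he⟩ := hyr
      have hsrc : p e ∈ U := by rw [he]; exact hy
      exact hx ⟨((H ⟨e, hsrc⟩).2 : p ⁻¹' {x}).1, ((H ⟨e, hsrc⟩).2 : p ⁻¹' {x}).2⟩
    · exact hp.isOpenMap.isOpen_range
  have : Set.range p = Set.univ :=
    hclopen.eq_univ (Set.range_nonempty p)
  intro x
  have : x ∈ Set.range p := this ▸ Set.mem_univ x
  exact this

/-- Lift a loop contained in an evenly covered neighborhood to a loop at any point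
of the fiber. -/
lemma loop_lift_in_triv {E X : Type*} [TopologicalSpace E] [TopologicalSpace X]
    (p : C(E, X)) (hp : IsCoveringMap p) {x : X} (δ : Path x x)
    [Nonempty (p ⁻¹' {x})] (hδ : ∀ t, δ t ∈ (hp x).toTrivialization.baseSet)
    (e : E) (he : p e = x) :
    ∃ δ' : Path e e, ∀ t, p (δ' t) = δ t := by
  subst he
  set T := (hp (p e)).toTrivialization with hTdef
  have hsrc : e ∈ T.source := T.mem_source.mpr (by have := hδ 0; rwa [δ.source] at this)
  set c := (T e).2 with hc
  have hmem : ∀ t, (δ t, c) ∈ T.target := by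
    intro t
    rw [T.target_eq]
    exact ⟨hδ t, Set.mem_univ _⟩
  have hcont : Continuous fun t => T.toOpenPartialHomeomorph.symm (δ t, c) := by
    refine T.toOpenPartialHomeomorph.continuousOn_symm.comp_continuous
      (δ.continuous.prodMk continuous_const) hmem
  have hproj : ∀ t, p (T.toOpenPartialHomeomorph.symm (δ t, c)) = δ t := by
    intro t
    exact T.proj_symm_apply (hmem t)
  have hend : ∀ t : unitInterval, δ t = p e → T.toOpenPartialHomeomorph.symm (δ t, c) = e := by
    intro t ht
    rw [ht]
    exact T.symm_apply_mk_proj hsrc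
  refine ⟨⟨⟨fun t => T.toOpenPartialHomeomorph.symm (δ t, c), hcont⟩, ?_, ?_⟩, hproj⟩
  · exact hend 0 δ.source
  · exact hend 1 δ.target

/-- Path lifting along a covering map: inductive construction over a subdivision. -/
lemma lift_up_to {E X : Type*} [TopologicalSpace E] [TopologicalSpace X]
    (p : C(E, X)) (hp : IsCoveringMap p) (q : C(unitInterval, X)) (n : ℕ) (hn : 0 < n)
    (hcov : ∀ k : ℕ, k < n → ∃ x' : X, ∀ t : unitInterval,
      (k : ℝ) / n ≤ (t : ℝ) → (t : ℝ) ≤ ((k : ℝ) + 1) / n →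
        q t ∈ (hp x').2.choose)
    (e₀ : E) (he₀ : p e₀ = q 0) :
    ∀ k : ℕ, k ≤ n → ∃ ℓ : C(unitInterval, E), ℓ 0 = e₀ ∧
      ∀ t : unitInterval, (t : ℝ) ≤ (k : ℝ) / n → p (ℓ t) = q t := by
  have hn' : (0 : ℝ) < n := by exact_mod_cast hn
  intro k
  induction k with
  | zero =>
    intro _
    refine ⟨ContinuousMap.const _ e₀, rfl, fun t ht => ?_⟩
    have h0 : (t : ℝ) = 0 := le_antisymm (by simpa using ht) t.2.1
    have ht0 : t = 0 := Subtype.ext (by simpa using h0)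
    rw [ht0]
    show p e₀ = q 0
    exact he₀
  | succ k ih =>
    intro hk1
    obtain ⟨ℓ, hℓ0, hℓ⟩ := ih (Nat.le_of_succ_le hk1)
    obtain ⟨x', hx'⟩ := hcov k (Nat.lt_of_succ_le hk1)
    haveI : Nonempty (p ⁻¹' {x'}) := by
      have hkn0 : (k : ℝ) / n ∈ Set.Icc (0 : ℝ) 1 :=
        ⟨by positivity, by rw [div_le_one hn']; exact_mod_cast Nat.le_of_succ_le hk1⟩
      have hmem := hx' ⟨_, hkn0⟩ le_rfl ((div_le_div_iff_of_pos_right hn').mpr (by linarith))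
      rw [← hℓ ⟨_, hkn0⟩ le_rfl] at hmem
      obtain ⟨-, -, -, H, -⟩ := (hp x').2.choose_spec
      exact ⟨(H ⟨_, hmem⟩).2⟩
    set T := (hp x').toTrivialization with hTdef
    have hkn : (k : ℝ) / n ∈ Set.Icc (0 : ℝ) 1 := by
      constructor
      · positivity
      · rw [div_le_one hn']; exact_mod_cast Nat.le_of_succ_le hk1
    have hk1n : ((k : ℝ) + 1) / n ∈ Set.Icc (0 : ℝ) 1 := by
      constructor
      · positivity
      · rw [div_le_one hn']; exact_mod_cast hk1
    set uk : unitInterval := ⟨(k : ℝ) / n, hkn⟩ with huk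
    have hle : (k : ℝ) / n ≤ ((k : ℝ) + 1) / n :=
      (div_le_div_iff_of_pos_right hn').mpr (by linarith)
    have hclamp_mem : ∀ t : unitInterval,
        max ((k : ℝ) / n) (min (t : ℝ) (((k : ℝ) + 1) / n)) ∈ Set.Icc (0 : ℝ) 1 := by
      intro t
      constructor
      · exact le_trans hkn.1 (le_max_left _ _)
      · exact max_le hkn.2 (le_trans (min_le_right _ _) hk1n.2)
    set clamp : unitInterval → unitInterval := fun t => ⟨_, hclamp_mem t⟩ with hclampdef
    have hclamp_cont : Continuous clamp :=
      Continuous.subtype_mk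
        (continuous_const.max (continuous_subtype_val.min continuous_const)) _
    have hclamp_range : ∀ t, (k : ℝ) / n ≤ (clamp t : ℝ) ∧ (clamp t : ℝ) ≤ ((k : ℝ) + 1) / n :=
      fun t => ⟨le_max_left _ _, max_le hle (min_le_right _ _)⟩
    have hbase : ∀ t, q (clamp t) ∈ T.baseSet :=
      fun t => hx' _ (hclamp_range t).1 (hclamp_range t).2
    have hpe' : p (ℓ uk) = q uk := hℓ uk le_rfl
    have hqk : q uk ∈ T.baseSet := hx' uk le_rfl hle
    have hsrc : ℓ uk ∈ T.source := T.mem_source.mpr (by rw [hpe']; exact hqk)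
    set c : p ⁻¹' {x'} := (T (ℓ uk)).2 with hc
    have hmemT : ∀ t, (q (clamp t), c) ∈ T.target := by
      intro t; rw [T.target_eq]; exact ⟨hbase t, Set.mem_univ _⟩
    set B : unitInterval → E := fun t => T.toOpenPartialHomeomorph.symm (q (clamp t), c) with hB
    have hBcont : Continuous B :=
      T.toOpenPartialHomeomorph.continuousOn_symm.comp_continuous
        ((q.continuous.comp hclamp_cont).prodMk continuous_const) hmemT
    have hBproj : ∀ t, p (B t) = q (clamp t) := fun t => T.proj_symm_apply (hmemT t)
    have hclamp_uk : clamp uk = uk := by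
      apply Subtype.ext
      show max ((k : ℝ) / n) (min ((k : ℝ) / n) (((k : ℝ) + 1) / n)) = (k : ℝ) / n
      rw [min_eq_left hle, max_self]
    have hBuk : B uk = ℓ uk := by
      rw [hB]
      simp only
      rw [hclamp_uk, ← hpe']
      exact T.symm_apply_mk_proj hsrc
    set ℓ' : unitInterval → E := fun t => if (t : ℝ) ≤ (k : ℝ) / n then ℓ t else B t with hℓ'
    have hcont' : Continuous ℓ' := by
      refine Continuous.if_le ℓ.continuous hBcont continuous_subtype_val continuous_const ?_
      intro t ht
      have : t = uk := Subtype.ext ht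
      rw [this, hBuk]
    refine ⟨⟨ℓ', hcont'⟩, ?_, ?_⟩
    · show ℓ' 0 = e₀
      have h0 : ((0 : unitInterval) : ℝ) ≤ (k : ℝ) / n := by
        rw [Set.Icc.coe_zero]; exact hkn.1
      simp only [hℓ']
      rw [if_pos h0]
      exact hℓ0
    · intro t ht
      show p (ℓ' t) = q t
      have ht' : (t : ℝ) ≤ ((k : ℝ) + 1) / n := by
        convert ht using 2
        push_cast
        ring
      by_cases hcase : (t : ℝ) ≤ (k : ℝ) / n
      · simp only [hℓ']
        rw [if_pos hcase]
        exact hℓ t hcase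
      · simp only [hℓ']
        rw [if_neg hcase]
        have h1 : clamp t = t := by
          apply Subtype.ext
          show max ((k : ℝ) / n) (min (t : ℝ) (((k : ℝ) + 1) / n)) = t
          rw [min_eq_left ht', max_eq_right (le_of_not_ge hcase)]
        rw [hBproj, h1]

/-- Path lifting for covering maps. -/
lemma exists_path_lift {E X : Type*} [TopologicalSpace E] [TopologicalSpace X]
    (p : C(E, X)) (hp : IsCoveringMap p) {x₀ x₁ : X} (q : Path x₀ x₁)
    (e₀ : E) (he₀ : p e₀ = x₀) :
    ∃ (e₁ : E) (ℓ : Path e₀ e₁), (p e₁ = x₁) ∧ ∀ t, p (ℓ t) = q t := by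
  obtain ⟨δ, hδpos, hball⟩ := lebesgue_number_lemma_of_metric (isCompact_univ (X := unitInterval))
    (c := fun x' : X => (q : C(unitInterval, X)) ⁻¹' (hp x').2.choose)
    (fun x' => ((hp x').2.choose_spec.2.1).preimage q.continuous)
    (fun t _ => Set.mem_iUnion.mpr ⟨q t, (hp (q t)).2.choose_spec.1⟩)
  obtain ⟨m, hm⟩ := exists_nat_one_div_lt hδpos
  set n : ℕ := m + 1 with hn
  have hn0 : 0 < n := Nat.succ_pos m
  have hn' : (0 : ℝ) < n := by exact_mod_cast hn0
  have hδn : (1 : ℝ) / n < δ := by exact_mod_cast hm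
  have hcov : ∀ k : ℕ, k < n → ∃ x' : X, ∀ t : unitInterval,
      (k : ℝ) / n ≤ (t : ℝ) → (t : ℝ) ≤ ((k : ℝ) + 1) / n →
        q t ∈ (hp x').2.choose := by
    intro k hk
    have hkn : (k : ℝ) / n ∈ Set.Icc (0 : ℝ) 1 :=
      ⟨by positivity, by rw [div_le_one hn']; exact_mod_cast le_of_lt hk⟩
    obtain ⟨x', hx'⟩ := hball ⟨(k : ℝ) / n, hkn⟩ (Set.mem_univ _)
    refine ⟨x', fun t h1 h2 => ?_⟩
    have : t ∈ Metric.ball (⟨(k : ℝ) / n, hkn⟩ : unitInterval) δ := by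
      rw [Metric.mem_ball, Subtype.dist_eq, Real.dist_eq, abs_sub_lt_iff]
      constructor
      · have : (t : ℝ) - (k : ℝ) / n ≤ 1 / n := by
          have : ((k : ℝ) + 1) / n - (k : ℝ) / n = 1 / n := by ring
          linarith
        linarith
      · simp only
        linarith [hδpos, h1, Nat.cast_nonneg (α := ℝ) n]
    exact hx' this
  obtain ⟨ℓ, hℓ0, hℓ⟩ := lift_up_to p hp (q : C(unitInterval, X)) n hn0 hcov e₀
    (by rw [he₀]; exact q.source.symm) n le_rfl
  have hall : ∀ t, p (ℓ t) = q t := by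
    intro t
    refine hℓ t ?_
    rw [div_self (ne_of_gt hn')]
    exact t.2.2
  refine ⟨ℓ 1, ⟨⟨(ℓ : unitInterval → E), ℓ.continuous⟩, hℓ0, rfl⟩, ?_, ?_⟩
  · rw [hall 1, q.target]
  · intro t
    exact hall t

end Helpers

/-- if `X` admits a covering by a small loop space, then `π₁ˢ(X,x)` is a normal
subgroup of `π₁(X,x)` for every `x ∈ X`. -/
theorem smallSet_normal_of_small_covering {E X : Type*} [TopologicalSpace E]
    [TopologicalSpace X] [PathConnectedSpace X] (p : C(E, X)) (hp : IsCoveringMap p)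
    (hE : IsSmallLoopSpace E) :
    ∀ x : X, ∃ H : Subgroup (FundamentalGroup X x),
      H.Normal ∧ (H : Set (FundamentalGroup X x)) = smallSet X x := by
  intro x
  obtain ⟨hEpc, -, hEsmall⟩ := hE
  haveI := hEpc
  have hsurj : Function.Surjective p := covering_surjective p hp
  refine ⟨{ carrier := smallSet X x
            mul_mem' := fun h1 h2 => smallSet_mul_mem h1 h2
            one_mem' := smallSet_one_mem x
            inv_mem' := fun h => smallSet_inv_mem h }, ⟨?_⟩, rfl⟩
  intro γ hγ g
  show IsSmall (g * γ * g⁻¹)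
  have hγ' : IsSmall γ := hγ
  clear hγ
  obtain ⟨e₀, he₀⟩ := hsurj x
  subst he₀
  haveI : Nonempty (p ⁻¹' {p e₀}) := ⟨⟨e₀, rfl⟩⟩
  obtain ⟨a, ha⟩ := Quotient.exists_rep (toLoop g⁻¹)
  have hag : fromLoop ⟦a⟧ = g⁻¹ := by rw [ha, fromLoop_toLoop]
  have hasymm : fromLoop ⟦a.symm⟧ = g := by rw [fromLoop_symm, hag, inv_inv]
  obtain ⟨e₁, aLift, hpe₁, haLift⟩ := exists_path_lift p hp a e₀ rfl
  obtain ⟨δ, hδU, hδγ⟩ := hγ' ((hp (p e₀)).toTrivialization.baseSet)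
    (((hp (p e₀)).toTrivialization.open_baseSet).mem_nhds
      (hp (p e₀)).mem_toTrivialization_baseSet)
  obtain ⟨δ', hδ'⟩ := loop_lift_in_triv p hp δ hδU e₁ hpe₁
  set L : Path e₀ e₀ := aLift.trans (δ'.trans aLift.symm) with hL
  have hsmallL := hEsmall e₀ (fromLoop ⟦L⟧)
  set M : Path (p e₀) (p e₀) := a.trans (δ.trans a.symm) with hM
  have hLM : ∀ t, p (L t) = M t := by
    intro t
    rw [hL, hM]
    simp only [Path.trans_apply]
    split_ifs with h1 h2
    · exact haLift _
    · exact hδ' _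
    · show p (aLift.symm _) = a.symm _
      show p (aLift _) = a _
      exact haLift _
  have hMval : fromLoop (⟦M⟧ : Path.Homotopic.Quotient (p e₀) (p e₀)) = g * γ * g⁻¹ := by
    rw [hM, fromLoop_trans, fromLoop_trans, hasymm, hδγ, hag]
  rw [← hMval]
  intro U hU
  have hpU : p ⁻¹' U ∈ nhds e₀ := p.continuous.continuousAt.preimage_mem_nhds hU
  obtain ⟨ρ, hρU, hρL⟩ := hsmallL (p ⁻¹' U) hpU
  have hρL' : (⟦ρ⟧ : Path.Homotopic.Quotient e₀ e₀) = ⟦L⟧ := fromLoop_injective hρL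
  refine ⟨ρ.map p.continuous, fun t => hρU t, ?_⟩
  have h1 : (⟦ρ.map p.continuous⟧ : Path.Homotopic.Quotient (p e₀) (p e₀)) =
      ⟦L.map p.continuous⟧ := by
    exact congrArg (fun q : Path.Homotopic.Quotient e₀ e₀ => Path.Homotopic.Quotient.map q p) hρL'
  have h2 : L.map p.continuous = M := by
    apply Path.ext
    funext t
    exact hLM t
  rw [h1, h2]

end
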